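/- Let θ : ℝ → ℝ∪{∞} be a proper lower semicontinuous function with θ(0)=0, θ(t)>0 for t>0, θ(t)=∞ for t<0. Fix γ>0, λ>0 and u ∈ ℝⁿ, and let S* be the set of minimizers over x ∈ ℝⁿ of (1/2)‖γx − u‖² + λθ(‖x‖). Then S* = {0} if u = 0, and otherwise S* = { (u/‖u‖)·s : s ∈ argmin_{t∈ℝ} ( (1/2)(γt − ‖u‖)² + λθ(t) ) }, i.e. S* equals (u/‖u‖) times the proximal set P_{λ/γ²}θ(‖u‖/γ). -/

import Mathlib

open scoped RealInnerProductSpace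

lemma aux_sq_le {n : ℕ} (γ : ℝ) (hγ : 0 < γ) (u y : EuclideanSpace ℝ (Fin n)) :
    (γ * ‖y‖ - ‖u‖)^2 ≤ ‖γ • y - u‖^2 := by
  have h1 : ‖γ • y - u‖^2 = ‖γ • y‖^2 - 2*⟪γ • y, u⟫ + ‖u‖^2 := norm_sub_sq_real _ _
  have h2 : ‖γ • y‖ = γ * ‖y‖ := by
    rw [norm_smul, Real.norm_eq_abs, abs_of_pos hγ]
  have h3 : ⟪γ • y, u⟫ = γ * ⟪y, u⟫ := real_inner_smul_left _ _ _
  have h4 : ⟪y, u⟫ ≤ ‖y‖ * ‖u‖ := real_inner_le_norm _ _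
  have h5 : γ * (inner ℝ y u : ℝ) ≤ γ * (‖y‖ * ‖u‖) := mul_le_mul_of_nonneg_left h4 hγ.le
  rw [h1, h3, h2]
  nlinarith [h5]

lemma aux_pt {n : ℕ} (γ : ℝ) (u : EuclideanSpace ℝ (Fin n)) (hu : u ≠ 0)
    (s : ℝ) (hs : 0 ≤ s) :
    ‖(s / ‖u‖) • u‖ = s ∧ ‖γ • ((s / ‖u‖) • u) - u‖^2 = (γ * s - ‖u‖)^2 := by
  have hu' : ‖u‖ ≠ 0 := norm_ne_zero_iff.2 hu
  have h1 : ‖(s / ‖u‖) • u‖ = s := by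
    rw [norm_smul, Real.norm_eq_abs, abs_div, abs_of_nonneg hs,
      abs_of_nonneg (norm_nonneg u)]
    field_simp
  refine ⟨h1, ?_⟩
  have h2 : γ • ((s / ‖u‖) • u) - u = (γ * s / ‖u‖ - 1) • u := by
    rw [smul_smul, sub_smul, one_smul, mul_div_assoc]
  rw [h2, norm_smul, Real.norm_eq_abs, mul_pow, sq_abs]
  field_simp
  try ring

/-- prox of `λ θ(‖·‖)` on ℝⁿ reduces to the scalar prox of θ
along the direction `u/‖u‖`. -/
theorem stmt_0 {n : ℕ} (θ : ℝ → EReal)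
    (hlsc : LowerSemicontinuous θ)
    (hθ0 : θ 0 = 0) (hθpos : ∀ t : ℝ, 0 < t → 0 < θ t)
    (hθneg : ∀ t : ℝ, t < 0 → θ t = ⊤)
    (γ lam : ℝ) (hγ : 0 < γ) (hlam : 0 < lam)
    (u : EuclideanSpace ℝ (Fin n))
    (S : Set (EuclideanSpace ℝ (Fin n)))
    (hS : S = {x | ∀ y : EuclideanSpace ℝ (Fin n),
      (((1/2) * ‖γ • x - u‖^2 : ℝ) : EReal) + (lam : EReal) * θ ‖x‖
        ≤ (((1/2) * ‖γ • y - u‖^2 : ℝ) : EReal) + (lam : EReal) * θ ‖y‖}) :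
    (u = 0 → S = {0}) ∧
    (u ≠ 0 → S = (fun s : ℝ => (s / ‖u‖) • u) ''
      {t : ℝ | ∀ s : ℝ,
        (((1/2) * (γ * t - ‖u‖)^2 : ℝ) : EReal) + (lam : EReal) * θ t
          ≤ (((1/2) * (γ * s - ‖u‖)^2 : ℝ) : EReal) + (lam : EReal) * θ s}) := by
  subst hS
  have hθnn : ∀ t : ℝ, 0 ≤ t → (0:EReal) ≤ θ t := by
    intro t ht
    rcases ht.eq_or_lt with h | h
    · rw [← h, hθ0]
    · exact (hθpos t h).le
  have hgnn : ∀ t : ℝ, 0 ≤ t → (0:EReal) ≤ (lam:EReal) * θ t := fun t ht =>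
    mul_nonneg (by exact_mod_cast hlam.le) (hθnn t ht)
  have hg0 : (lam:EReal) * θ 0 = 0 := by rw [hθ0, mul_zero]
  have hgtop : ∀ t : ℝ, t < 0 → (lam:EReal) * θ t = ⊤ := fun t ht => by
    rw [hθneg t ht, EReal.coe_mul_top_of_pos hlam]
  constructor
  · rintro rfl
    ext x
    simp only [Set.mem_setOf_eq, Set.mem_singleton_iff]
    constructor
    · intro hx
      by_contra hne
      have hx0 := hx 0
      rw [norm_zero, hg0, add_zero] at hx0
      have h00 : ‖γ • (0:EuclideanSpace ℝ (Fin n)) - 0‖ = 0 := by simp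
      rw [h00] at hx0
      have hz : (((1/2) * (0:ℝ)^2 : ℝ) : EReal) = 0 := by norm_num
      rw [hz] at hx0
      have h1 : (0:ℝ) < (1/2) * ‖γ • x - 0‖^2 := by
        have h2 : γ • x - 0 ≠ 0 := by
          simpa [sub_zero] using smul_ne_zero hγ.ne' hne
        have := norm_pos_iff.2 h2
        positivity
      have hpos : (0:EReal) < (((1/2) * ‖γ • x - 0‖^2 : ℝ) : EReal)
          + (lam:EReal) * θ ‖x‖ := by
        calc (0:EReal) < (((1/2) * ‖γ • x - 0‖^2 : ℝ) : EReal) := by exact_mod_cast h1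
          _ = _ + 0 := (add_zero _).symm
          _ ≤ _ := add_le_add_right (hgnn _ (norm_nonneg x)) _
      exact absurd hx0 (not_le.2 hpos)
    · rintro rfl y
      have h00 : ‖γ • (0:EuclideanSpace ℝ (Fin n)) - 0‖ = 0 := by simp
      rw [norm_zero, hg0, add_zero, h00]
      have hz : (((1/2) * (0:ℝ)^2 : ℝ) : EReal) = 0 := by norm_num
      rw [hz]
      refine add_nonneg ?_ (hgnn _ (norm_nonneg y))
      exact_mod_cast (by positivity : (0:ℝ) ≤ (1/2) * ‖γ • y - 0‖^2)
  · intro hu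
    have hν : (0:ℝ) < ‖u‖ := norm_pos_iff.2 hu
    ext x
    simp only [Set.mem_setOf_eq, Set.mem_image]
    constructor
    · intro hx
      -- the key: value at x dominates scalar objective at every s
      have hx' : ∀ s : ℝ, (((1/2) * ‖γ • x - u‖^2 : ℝ) : EReal) + (lam:EReal) * θ ‖x‖
          ≤ (((1/2) * (γ * s - ‖u‖)^2 : ℝ) : EReal) + (lam:EReal) * θ s := by
        intro s
        rcases lt_or_ge s 0 with hs | hs
        · rw [hgtop s hs, EReal.add_top_of_ne_bot (EReal.coe_ne_bot _)]
          exact le_top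
        · obtain ⟨hn, hsq⟩ := aux_pt γ u hu s hs
          have := hx ((s / ‖u‖) • u)
          rwa [hn, hsq] at this
      refine ⟨‖x‖, ?_, ?_⟩
      · intro s
        refine le_trans (add_le_add_left ?_ _) (hx' s)
        exact EReal.coe_le_coe_iff.2 (by have := aux_sq_le γ hγ u x; linarith)
      · -- need x = (‖x‖/‖u‖) • u using equality case of Cauchy-Schwarz
        have htop : (lam:EReal) * θ ‖x‖ ≠ ⊤ := by
          intro h
          have h0 := hx 0
          rw [h, EReal.add_top_of_ne_bot (EReal.coe_ne_bot _), norm_zero, hg0, add_zero] at h0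
          exact EReal.coe_ne_top _ (top_le_iff.1 h0)
        have hbot : (lam:EReal) * θ ‖x‖ ≠ ⊥ :=
          (EReal.bot_lt_zero.trans_le (hgnn _ (norm_nonneg x))).ne'
        obtain ⟨r, hr⟩ := EReal.canLift.prf _ ⟨htop, hbot⟩
        have hle1 : (((1/2) * (γ * ‖x‖ - ‖u‖)^2 : ℝ) : EReal) + (lam:EReal) * θ ‖x‖
            ≤ (((1/2) * ‖γ • x - u‖^2 : ℝ) : EReal) + (lam:EReal) * θ ‖x‖ := by
          refine add_le_add_left ?_ _
          exact EReal.coe_le_coe_iff.2 (by have := aux_sq_le γ hγ u x; linarith)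
        have heq : (1/2) * (γ * ‖x‖ - ‖u‖)^2 = (1/2) * ‖γ • x - u‖^2 := by
          have h2 := le_antisymm hle1 (hx' ‖x‖)
          rw [← hr, ← EReal.coe_add, ← EReal.coe_add, EReal.coe_eq_coe_iff] at h2
          linarith
        have hsq : ‖γ • x - u‖^2 = (γ * ‖x‖)^2 - 2*(γ * ⟪x, u⟫) + ‖u‖^2 := by
          rw [norm_sub_sq_real, real_inner_smul_left, norm_smul, Real.norm_eq_abs,
            abs_of_pos hγ]
        have hinner : ⟪x, u⟫ = ‖x‖ * ‖u‖ := by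
          have : γ * ⟪x, u⟫ = γ * (‖x‖ * ‖u‖) := by nlinarith
          exact mul_left_cancel₀ hγ.ne' this
        have hcs : ‖u‖ • x = ‖x‖ • u := inner_eq_norm_mul_iff_real.1 hinner
        have : (‖x‖ / ‖u‖) • u = x := by
          rw [div_eq_mul_inv, mul_comm, mul_smul, ← hcs, smul_smul,
            inv_mul_cancel₀ hν.ne', one_smul]
        exact this
    · rintro ⟨t, ht, rfl⟩
      have ht0 : 0 ≤ t := by
        by_contra h
        push_neg at h
        have h0 := ht 0
        rw [hgtop t h, EReal.add_top_of_ne_bot (EReal.coe_ne_bot _), hg0, add_zero] at h0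
        exact EReal.coe_ne_top _ (top_le_iff.1 h0)
      obtain ⟨hn, hsq⟩ := aux_pt γ u hu t ht0
      intro y
      calc (((1/2) * ‖γ • ((t / ‖u‖) • u) - u‖^2 : ℝ) : EReal)
            + (lam:EReal) * θ ‖(t / ‖u‖) • u‖
          = (((1/2) * (γ * t - ‖u‖)^2 : ℝ) : EReal) + (lam:EReal) * θ t := by
            rw [hn, hsq]
        _ ≤ (((1/2) * (γ * ‖y‖ - ‖u‖)^2 : ℝ) : EReal) + (lam:EReal) * θ ‖y‖ := ht ‖y‖
        _ ≤ (((1/2) * ‖γ • y - u‖^2 : ℝ) : EReal) + (lam:EReal) * θ ‖y‖ := by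
            refine add_le_add_left ?_ _
            exact EReal.coe_le_coe_iff.2 (by have := aux_sq_le γ hγ u y; linarith)
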